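/- The number of minimal 3D polyominoes inscribed in a 2×b×k prism equals Σ_{P} Σ_{x∈P} 2^{deg(x)}, where the outer sum is over minimal 2D polyominoes P inscribed in a b×k rectangle and deg(x) is the number of cells of P adjacent to x. -/

import Mathlib

/-- Edge-adjacency of 2D cells. -/
def Adj2 (a b : ℕ × ℕ) : Prop :=
  (a.1 = b.1 ∧ (a.2 + 1 = b.2 ∨ b.2 + 1 = a.2)) ∨
  (a.2 = b.2 ∧ (a.1 + 1 = b.1 ∨ b.1 + 1 = a.1))

attribute [local instance] Classical.propDecidable

def Connected2 (P : Finset (ℕ × ℕ)) : Prop :=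
  ∀ a ∈ P, ∀ b ∈ P,
    Relation.ReflTransGen (fun u v => u ∈ P ∧ v ∈ P ∧ Adj2 u v) a b

def Inscribed2 (b k : ℕ) (P : Finset (ℕ × ℕ)) : Prop :=
  (∀ c ∈ P, c.1 < b ∧ c.2 < k) ∧
  (∃ c ∈ P, c.1 = 0) ∧ (∃ c ∈ P, c.1 = b - 1) ∧
  (∃ c ∈ P, c.2 = 0) ∧ (∃ c ∈ P, c.2 = k - 1)

/-- Minimal 2D polyomino inscribed in a `b × k` rectangle (area `b + k - 1`). -/
def MinPoly2D (b k : ℕ) (P : Finset (ℕ × ℕ)) : Prop :=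
  P.Nonempty ∧ Connected2 P ∧ Inscribed2 b k P ∧ P.card = b + k - 1

/-- The degree of a cell `x` in a 2D polyomino `P`. -/
noncomputable def deg2 (P : Finset (ℕ × ℕ)) (x : ℕ × ℕ) : ℕ :=
  (P.filter fun y => Adj2 x y).card

/-- Face-adjacency of 3D cells. -/
def Adj3 (a b : ℕ × ℕ × ℕ) : Prop :=
  (a.1 = b.1 ∧ Adj2 a.2 b.2) ∨
  (a.2 = b.2 ∧ (a.1 + 1 = b.1 ∨ b.1 + 1 = a.1))

def Connected3 (P : Finset (ℕ × ℕ × ℕ)) : Prop :=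
  ∀ a ∈ P, ∀ b ∈ P,
    Relation.ReflTransGen (fun u v => u ∈ P ∧ v ∈ P ∧ Adj3 u v) a b

def Inscribed3 (b k h : ℕ) (P : Finset (ℕ × ℕ × ℕ)) : Prop :=
  (∀ c ∈ P, c.1 < b ∧ c.2.1 < k ∧ c.2.2 < h) ∧
  (∃ c ∈ P, c.1 = 0) ∧ (∃ c ∈ P, c.1 = b - 1) ∧
  (∃ c ∈ P, c.2.1 = 0) ∧ (∃ c ∈ P, c.2.1 = k - 1) ∧
  (∃ c ∈ P, c.2.2 = 0) ∧ (∃ c ∈ P, c.2.2 = h - 1)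

/-- Minimal 3D polyomino inscribed in a `b × k × h` prism (volume `b + k + h - 2`). -/
def MinPoly3D (b k h : ℕ) (P : Finset (ℕ × ℕ × ℕ)) : Prop :=
  P.Nonempty ∧ Connected3 P ∧ Inscribed3 b k h P ∧ P.card = b + k + h - 2


open Relation

set_option maxHeartbeats 1000000

lemma conn_card_le_aux : ∀ (n : ℕ) (V : Type) (_ : Fintype V) (G : SimpleGraph V),
    Fintype.card V = n → G.Connected → Fintype.card V ≤ G.edgeSet.ncard + 1 := by
  intro n
  induction n using Nat.strong_induction_on with
  | _ n IH =>
    intro V instV G hcard hconn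
    by_cases hn : Fintype.card V ≤ 1
    · omega
    push_neg at hn
    -- a root
    obtain ⟨r⟩ := hconn.nonempty
    -- a vertex of maximal distance from r
    obtain ⟨x, -, hx⟩ := Finset.exists_max_image (Finset.univ : Finset V) (G.dist r)
      ⟨r, Finset.mem_univ r⟩
    have hxr : x ≠ r := by
      obtain ⟨y, hy⟩ := Fintype.exists_ne_of_one_lt_card hn r
      have h1 : 0 < G.dist r y := (hconn.pos_dist_of_ne (Ne.symm hy))
      have h2 : G.dist r y ≤ G.dist r x := hx y (Finset.mem_univ y)
      intro h; rw [h] at h2; rw [SimpleGraph.dist_self] at h2; omega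
    -- the induced graph on the complement of x
    set V' := {y : V // y ≠ x} with hV'
    set G' : SimpleGraph V' := G.comap Subtype.val with hG'
    have hcard' : Fintype.card V' + 1 = Fintype.card V := by
      have : Fintype.card V' = Fintype.card V - Fintype.card {y : V // y = x} :=
        Fintype.card_subtype_compl _
      rw [Fintype.card_subtype_eq] at this
      omega
    have hrx : (r : V) ≠ x := Ne.symm hxr
    -- reachability in G'
    have claim : ∀ (d : ℕ) (y : V) (hy : y ≠ x), G.dist r y ≤ d →
        G'.Reachable ⟨y, hy⟩ ⟨r, hrx⟩ := by
      intro d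
      induction d with
      | zero =>
        intro y hy hd
        have : r = y := (hconn.dist_eq_zero_iff).mp (Nat.le_zero.mp hd)
        subst this; rfl
      | succ d ihd =>
        intro y hy hd
        by_cases hyr : y = r
        · subst hyr; rfl
        · obtain ⟨w, hw⟩ := (hconn y r).exists_walk_length_eq_dist
          cases w with
          | nil => exact absurd rfl hyr
          | @cons _ y' _ ha w' =>
            have hlen : w'.length + 1 = G.dist y r := by simpa using hw
            have hdy : 0 < G.dist r y := hconn.pos_dist_of_ne (Ne.symm hyr)
            have hdy' : G.dist r y' ≤ G.dist r y - 1 := by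
              have h1 : G.dist r y' ≤ w'.length := by
                rw [SimpleGraph.dist_comm]; exact SimpleGraph.dist_le w'
              rw [SimpleGraph.dist_comm] at hlen
              omega
            have hy'x : y' ≠ x := by
              intro h; subst h
              have := hx y (Finset.mem_univ y)
              omega
            have : G'.Reachable ⟨y', hy'x⟩ ⟨r, hrx⟩ := ihd y' hy'x (by omega)
            exact (SimpleGraph.Adj.reachable (by exact ha : G'.Adj ⟨y, hy⟩ ⟨y', hy'x⟩)).trans this
    have hconn' : G'.Connected := by
      rw [SimpleGraph.connected_iff]
      refine ⟨fun a b => ?_, ⟨⟨r, hrx⟩⟩⟩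
      exact (claim (G.dist r a.1) a.1 a.2 le_rfl).trans
        (claim (G.dist r b.1) b.1 b.2 le_rfl).symm
    -- a neighbor z of x
    obtain ⟨z, hz⟩ : ∃ z, G.Adj x z := by
      obtain ⟨p⟩ := hconn x r
      cases p with
      | nil => exact absurd rfl hxr
      | cons ha _ => exact ⟨_, ha⟩
    have hzx : s(x, z) ∈ G.edgeSet := hz
    -- edges of G' inject into edges of G minus s(x,z)
    have hmap : ∀ e ∈ G'.edgeSet, Sym2.map (Subtype.val : V' → V) e ∈ G.edgeSet \ {s(x, z)} := by
      intro e he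
      induction e with
      | _ a b =>
        refine ⟨he, ?_⟩
        simp only [Sym2.map_pair_eq, Set.mem_singleton_iff, Sym2.eq_iff]
        rintro (⟨h1, -⟩ | ⟨-, h2⟩)
        · exact a.2 h1
        · exact b.2 h2
    have hinj : Set.InjOn (Sym2.map (Subtype.val : V' → V)) G'.edgeSet :=
      (Sym2.map.injective Subtype.val_injective).injOn
    have hne : G'.edgeSet.ncard ≤ G.edgeSet.ncard - 1 := by
      calc G'.edgeSet.ncard = (Sym2.map (Subtype.val : V' → V) '' G'.edgeSet).ncard :=
            (Set.ncard_image_of_injOn hinj).symm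
        _ ≤ (G.edgeSet \ {s(x, z)}).ncard := by
            apply Set.ncard_le_ncard _ ((G.edgeSet \ {s(x,z)}).toFinite)
            rintro e ⟨e', he', rfl⟩
            exact hmap e' he'
        _ = G.edgeSet.ncard - 1 := by
            rw [Set.ncard_diff_singleton_of_mem hzx]
    have hpos : 1 ≤ G.edgeSet.ncard := by
      rw [Nat.one_le_iff_ne_zero]
      intro h
      rw [Set.ncard_eq_zero (G.edgeSet.toFinite)] at h
      exact (Set.eq_empty_iff_forall_notMem.mp h _) hzx
    have hIH := IH (Fintype.card V') (by omega) V' inferInstance G' rfl hconn'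
    omega


lemma adj2_symm {u v : ℕ × ℕ} (h : Adj2 u v) : Adj2 v u := by
  unfold Adj2 at *; omega

lemma adj2_irrefl (u : ℕ × ℕ) : ¬ Adj2 u u := by
  unfold Adj2; omega

lemma adj2_fst {u v : ℕ × ℕ} (h : Adj2 u v) : u.1 = v.1 ∨ u.1 + 1 = v.1 ∨ v.1 + 1 = u.1 := by
  unfold Adj2 at h; omega

lemma adj2_snd {u v : ℕ × ℕ} (h : Adj2 u v) : u.2 = v.2 ∨ u.2 + 1 = v.2 ∨ v.2 + 1 = u.2 := by
  unfold Adj2 at h; omega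

def rel2 (P : Finset (ℕ × ℕ)) (u v : ℕ × ℕ) : Prop := u ∈ P ∧ v ∈ P ∧ Adj2 u v

def EH (P : Finset (ℕ × ℕ)) : Finset (ℕ × ℕ) := P.filter fun u => (u.1, u.2 + 1) ∈ P
def EV (P : Finset (ℕ × ℕ)) : Finset (ℕ × ℕ) := P.filter fun u => (u.1 + 1, u.2) ∈ P

def G2 (P : Finset (ℕ × ℕ)) : SimpleGraph {y // y ∈ P} where
  Adj u v := Adj2 u.1 v.1
  symm := ⟨fun _ _ h => adj2_symm h⟩
  loopless := ⟨fun u h => adj2_irrefl _ h⟩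

lemma g2_adj {P : Finset (ℕ × ℕ)} {u v : {y // y ∈ P}} : (G2 P).Adj u v ↔ Adj2 u.1 v.1 :=
  Iff.rfl

noncomputable def fE (P : Finset (ℕ × ℕ)) : Sym2 {y // y ∈ P} → (ℕ × ℕ) × Bool :=
  Sym2.lift ⟨fun a b =>
    if a.1.1 = b.1.1 then ((a.1.1, min a.1.2 b.1.2), false)
    else ((min a.1.1 b.1.1, max a.1.2 b.1.2), true),
    by
      intro a b
      dsimp only
      by_cases h : a.1.1 = b.1.1
      · rw [if_pos h, if_pos h.symm, h, inf_comm]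
      · rw [if_neg h, if_neg (fun hh => h hh.symm), inf_comm, sup_comm]⟩

lemma fE_char {P : Finset (ℕ × ℕ)} (a b : {y // y ∈ P}) (h : Adj2 a.1 b.1) :
    (∃ c, c ∈ EH P ∧ fE P s(a, b) = (c, false) ∧
      ((a.1 = c ∧ b.1 = (c.1, c.2 + 1)) ∨ (b.1 = c ∧ a.1 = (c.1, c.2 + 1)))) ∨
    (∃ c, c ∈ EV P ∧ fE P s(a, b) = (c, true) ∧
      ((a.1 = c ∧ b.1 = (c.1 + 1, c.2)) ∨ (b.1 = c ∧ a.1 = (c.1 + 1, c.2)))) := by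
  have hfe : fE P s(a, b) = if a.1.1 = b.1.1 then ((a.1.1, min a.1.2 b.1.2), false)
      else ((min a.1.1 b.1.1, max a.1.2 b.1.2), true) := rfl
  rcases h with ⟨h1, h2⟩ | ⟨h1, h2⟩
  · left
    rw [hfe, if_pos h1]
    rcases h2 with h2 | h2
    · refine ⟨a.1, ?_, ?_, Or.inl ⟨rfl, ?_⟩⟩
      · exact Finset.mem_filter.mpr ⟨a.2, by
          have : (a.1.1, a.1.2 + 1) = b.1 := by
            apply Prod.ext <;> simp [h1, h2]
          rw [this]; exact b.2⟩
      · have : min a.1.2 b.1.2 = a.1.2 := by omega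
        rw [this]
      · apply Prod.ext <;> simp [h1.symm, h2.symm]
    · refine ⟨b.1, ?_, ?_, Or.inr ⟨rfl, ?_⟩⟩
      · exact Finset.mem_filter.mpr ⟨b.2, by
          have : (b.1.1, b.1.2 + 1) = a.1 := by
            apply Prod.ext <;> simp [h1, h2]
          rw [this]; exact a.2⟩
      · have : min a.1.2 b.1.2 = b.1.2 := by omega
        rw [this, h1]
      · apply Prod.ext <;> simp [h1, h2.symm]
  · right
    have hne : ¬ a.1.1 = b.1.1 := by omega
    rw [hfe, if_neg hne]
    rcases h2 with h2 | h2
    · refine ⟨a.1, ?_, ?_, Or.inl ⟨rfl, ?_⟩⟩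
      · exact Finset.mem_filter.mpr ⟨a.2, by
          have : (a.1.1 + 1, a.1.2) = b.1 := by
            apply Prod.ext <;> simp [h1, h2]
          rw [this]; exact b.2⟩
      · have h3 : min a.1.1 b.1.1 = a.1.1 := by omega
        have h4 : max a.1.2 b.1.2 = a.1.2 := by omega
        rw [h3, h4]
      · apply Prod.ext <;> simp [h1.symm, h2.symm]
    · refine ⟨b.1, ?_, ?_, Or.inr ⟨rfl, ?_⟩⟩
      · exact Finset.mem_filter.mpr ⟨b.2, by
          have : (b.1.1 + 1, b.1.2) = a.1 := by
            apply Prod.ext <;> simp [h1, h2]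
          rw [this]; exact a.2⟩
      · have h3 : min a.1.1 b.1.1 = b.1.1 := by omega
        have h4 : max a.1.2 b.1.2 = b.1.2 := by omega
        rw [h3, h4]
      · apply Prod.ext <;> simp [h1, h2.symm]

lemma edge_bound (P : Finset (ℕ × ℕ)) :
    (G2 P).edgeSet.ncard ≤ (EH P).card + (EV P).card := by
  classical
  set T : Finset ((ℕ × ℕ) × Bool) :=
    (EH P).image (fun u => (u, false)) ∪ (EV P).image (fun u => (u, true)) with hT
  have hTcard : T.card ≤ (EH P).card + (EV P).card :=
    le_trans (Finset.card_union_le _ _)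
      (Nat.add_le_add (Finset.card_image_le) (Finset.card_image_le))
  have h1 : (G2 P).edgeSet.ncard ≤ (T : Set ((ℕ × ℕ) × Bool)).ncard := by
    apply Set.ncard_le_ncard_of_injOn (fE P)
    · intro e he
      induction e with
      | _ a b =>
        have hadj : Adj2 a.1 b.1 := he
        rcases fE_char a b hadj with ⟨c, hc, hfc, -⟩ | ⟨c, hc, hfc, -⟩
        · rw [hfc]
          simp only [hT, Finset.coe_union, Set.mem_union, Finset.coe_image]
          exact Or.inl ⟨c, by simpa using hc, rfl⟩
        · rw [hfc]
          simp only [hT, Finset.coe_union, Set.mem_union, Finset.coe_image]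
          exact Or.inr ⟨c, by simpa using hc, rfl⟩
    · intro e1 he1 e2 he2 hfeq
      induction e1 with
      | _ a b =>
        induction e2 with
        | _ u v =>
          have hadj1 : Adj2 a.1 b.1 := he1
          have hadj2 : Adj2 u.1 v.1 := he2
          rcases fE_char a b hadj1 with ⟨c, -, hfc, hab⟩ | ⟨c, -, hfc, hab⟩ <;>
            rcases fE_char u v hadj2 with ⟨d, -, hfd, huv⟩ | ⟨d, -, hfd, huv⟩ <;>
              rw [hfc, hfd] at hfeq
          · have hcd : c = d := (Prod.ext_iff.mp hfeq).1
            subst hcd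
            rcases hab with ⟨h1, h2⟩ | ⟨h1, h2⟩ <;> rcases huv with ⟨h3, h4⟩ | ⟨h3, h4⟩ <;>
              rw [Sym2.eq_iff] <;>
              first
              | exact Or.inl ⟨Subtype.ext (h1.trans h3.symm), Subtype.ext (h2.trans h4.symm)⟩
              | exact Or.inr ⟨Subtype.ext (h1.trans h3.symm), Subtype.ext (h2.trans h4.symm)⟩
              | exact Or.inr ⟨Subtype.ext (h2.trans h4.symm), Subtype.ext (h1.trans h3.symm)⟩
              | exact Or.inl ⟨Subtype.ext (h2.trans h4.symm), Subtype.ext (h1.trans h3.symm)⟩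
          · exact absurd (Prod.ext_iff.mp hfeq).2 (by simp)
          · exact absurd (Prod.ext_iff.mp hfeq).2 (by simp)
          · have hcd : c = d := (Prod.ext_iff.mp hfeq).1
            subst hcd
            rcases hab with ⟨h1, h2⟩ | ⟨h1, h2⟩ <;> rcases huv with ⟨h3, h4⟩ | ⟨h3, h4⟩ <;>
              rw [Sym2.eq_iff] <;>
              first
              | exact Or.inl ⟨Subtype.ext (h1.trans h3.symm), Subtype.ext (h2.trans h4.symm)⟩
              | exact Or.inr ⟨Subtype.ext (h1.trans h3.symm), Subtype.ext (h2.trans h4.symm)⟩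
              | exact Or.inr ⟨Subtype.ext (h2.trans h4.symm), Subtype.ext (h1.trans h3.symm)⟩
              | exact Or.inl ⟨Subtype.ext (h2.trans h4.symm), Subtype.ext (h1.trans h3.symm)⟩
  rw [Set.ncard_coe_finset] at h1
  omega

lemma EH_card (P : Finset (ℕ × ℕ)) : (EH P).card + (P.image Prod.fst).card ≤ P.card := by
  classical
  have hne : ∀ i : {x // x ∈ P.image Prod.fst},
      ((P.filter fun c => c.1 = i.1).image Prod.snd).Nonempty := by
    intro i
    obtain ⟨c, hc, hci⟩ := Finset.mem_image.mp i.2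
    exact ⟨c.2, Finset.mem_image.mpr ⟨c, Finset.mem_filter.mpr ⟨hc, hci⟩, rfl⟩⟩
  set M : Finset (ℕ × ℕ) := (P.image Prod.fst).attach.image
    (fun (i : {x // x ∈ P.image Prod.fst}) => (i.1, ((P.filter fun c => c.1 = i.1).image Prod.snd).max' (hne i))) with hM
  have hMP : M ⊆ P := by
    intro u hu
    obtain ⟨i, -, rfl⟩ := Finset.mem_image.mp hu
    have hmax := Finset.max'_mem _ (hne i)
    obtain ⟨c, hc, hc2⟩ := Finset.mem_image.mp hmax
    obtain ⟨hcP, hc1⟩ := Finset.mem_filter.mp hc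
    have heq : (i.1, Finset.max' _ (hne i)) = c :=
      Prod.ext hc1.symm hc2.symm
    rw [heq]; exact hcP
  have hMcard : M.card = (P.image Prod.fst).card := by
    rw [hM, Finset.card_image_of_injOn, Finset.card_attach]
    intro i _ j _ hij
    exact Subtype.ext (congrArg Prod.fst hij)
  have hdisj : Disjoint (EH P) M := by
    rw [Finset.disjoint_right]
    intro u hu hEH
    obtain ⟨i, -, rfl⟩ := Finset.mem_image.mp hu
    obtain ⟨-, hnext⟩ := Finset.mem_filter.mp hEH
    have hin : Finset.max' _ (hne i) + 1
        ∈ (P.filter fun c => c.1 = i.1).image Prod.snd :=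
      Finset.mem_image.mpr ⟨_, Finset.mem_filter.mpr ⟨hnext, rfl⟩, rfl⟩
    have hle := Finset.le_max' _ _ hin
    omega
  calc (EH P).card + (P.image Prod.fst).card = (EH P ∪ M).card := by
        rw [Finset.card_union_of_disjoint hdisj, hMcard]
    _ ≤ P.card := Finset.card_le_card
        (Finset.union_subset (Finset.filter_subset _ _) hMP)

lemma EV_card (P : Finset (ℕ × ℕ)) : (EV P).card + (P.image Prod.snd).card ≤ P.card := by
  classical
  have hne : ∀ i : {x // x ∈ P.image Prod.snd},
      ((P.filter fun c => c.2 = i.1).image Prod.fst).Nonempty := by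
    intro i
    obtain ⟨c, hc, hci⟩ := Finset.mem_image.mp i.2
    exact ⟨c.1, Finset.mem_image.mpr ⟨c, Finset.mem_filter.mpr ⟨hc, hci⟩, rfl⟩⟩
  set M : Finset (ℕ × ℕ) := (P.image Prod.snd).attach.image
    (fun (i : {x // x ∈ P.image Prod.snd}) => (((P.filter fun c => c.2 = i.1).image Prod.fst).max' (hne i), i.1)) with hM
  have hMP : M ⊆ P := by
    intro u hu
    obtain ⟨i, -, rfl⟩ := Finset.mem_image.mp hu
    have hmax := Finset.max'_mem _ (hne i)
    obtain ⟨c, hc, hc2⟩ := Finset.mem_image.mp hmax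
    obtain ⟨hcP, hc1⟩ := Finset.mem_filter.mp hc
    have heq : (Finset.max' _ (hne i), i.1) = c :=
      Prod.ext hc2.symm hc1.symm
    rw [heq]; exact hcP
  have hMcard : M.card = (P.image Prod.snd).card := by
    rw [hM, Finset.card_image_of_injOn, Finset.card_attach]
    intro i _ j _ hij
    exact Subtype.ext (congrArg Prod.snd hij)
  have hdisj : Disjoint (EV P) M := by
    rw [Finset.disjoint_right]
    intro u hu hEV
    obtain ⟨i, -, rfl⟩ := Finset.mem_image.mp hu
    obtain ⟨-, hnext⟩ := Finset.mem_filter.mp hEV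
    have hin : Finset.max' _ (hne i) + 1
        ∈ (P.filter fun c => c.2 = i.1).image Prod.fst :=
      Finset.mem_image.mpr ⟨_, Finset.mem_filter.mpr ⟨hnext, rfl⟩, rfl⟩
    have hle := Finset.le_max' _ _ hin
    omega
  calc (EV P).card + (P.image Prod.snd).card = (EV P ∪ M).card := by
        rw [Finset.card_union_of_disjoint hdisj, hMcard]
    _ ≤ P.card := Finset.card_le_card
        (Finset.union_subset (Finset.filter_subset _ _) hMP)

lemma ivt_fst {P : Finset (ℕ × ℕ)} {a c : ℕ × ℕ} (h : ReflTransGen (rel2 P) a c)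
    (ha : a ∈ P) :
    ∀ m, (a.1 ≤ m ∨ c.1 ≤ m) → (m ≤ a.1 ∨ m ≤ c.1) → ∃ d ∈ P, d.1 = m := by
  induction h with
  | refl => intro m h1 h2; exact ⟨a, ha, by omega⟩
  | @tail p q hap hpq ih =>
    intro m h1 h2
    obtain ⟨hpP, hqP, hadj⟩ := hpq
    by_cases hm : m = q.1
    · exact ⟨q, hqP, hm.symm⟩
    · have hd := adj2_fst hadj
      exact ih m (by omega) (by omega)

lemma ivt_snd {P : Finset (ℕ × ℕ)} {a c : ℕ × ℕ} (h : ReflTransGen (rel2 P) a c)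
    (ha : a ∈ P) :
    ∀ m, (a.2 ≤ m ∨ c.2 ≤ m) → (m ≤ a.2 ∨ m ≤ c.2) → ∃ d ∈ P, d.2 = m := by
  induction h with
  | refl => intro m h1 h2; exact ⟨a, ha, by omega⟩
  | @tail p q hap hpq ih =>
    intro m h1 h2
    obtain ⟨hpP, hqP, hadj⟩ := hpq
    by_cases hm : m = q.2
    · exact ⟨q, hqP, hm.symm⟩
    · have hd := adj2_snd hadj
      exact ih m (by omega) (by omega)

lemma image_fst_eq {b k : ℕ} {P : Finset (ℕ × ℕ)} (hconn : Connected2 P)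
    (hins : Inscribed2 b k P) : P.image Prod.fst = Finset.range b := by
  obtain ⟨hbd, ⟨c0, hc0, hc01⟩, ⟨c1, hc1, hc11⟩, -, -⟩ := hins
  apply Finset.Subset.antisymm
  · intro i hi
    obtain ⟨c, hc, rfl⟩ := Finset.mem_image.mp hi
    exact Finset.mem_range.mpr (hbd c hc).1
  · intro m hm
    rw [Finset.mem_range] at hm
    obtain ⟨d, hd, hd1⟩ := ivt_fst (hconn c0 hc0 c1 hc1) hc0 m (by omega) (by omega)
    exact Finset.mem_image.mpr ⟨d, hd, hd1⟩

lemma image_snd_eq {b k : ℕ} {P : Finset (ℕ × ℕ)} (hconn : Connected2 P)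
    (hins : Inscribed2 b k P) : P.image Prod.snd = Finset.range k := by
  obtain ⟨hbd, -, -, ⟨c0, hc0, hc01⟩, ⟨c1, hc1, hc11⟩⟩ := hins
  apply Finset.Subset.antisymm
  · intro i hi
    obtain ⟨c, hc, rfl⟩ := Finset.mem_image.mp hi
    exact Finset.mem_range.mpr (hbd c hc).2
  · intro m hm
    rw [Finset.mem_range] at hm
    obtain ⟨d, hd, hd1⟩ := ivt_snd (hconn c0 hc0 c1 hc1) hc0 m (by omega) (by omega)
    exact Finset.mem_image.mpr ⟨d, hd, hd1⟩

lemma rtg_reachable {P : Finset (ℕ × ℕ)} {u v : ℕ × ℕ}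
    (h : ReflTransGen (rel2 P) u v) (hu : u ∈ P) :
    ∀ hv : v ∈ P, (G2 P).Reachable ⟨u, hu⟩ ⟨v, hv⟩ := by
  induction h with
  | refl => intro hv; rfl
  | @tail p q hup hpq ih =>
    intro hv
    obtain ⟨hpP, hqP, hadj⟩ := hpq
    exact (ih hpP).trans (SimpleGraph.Adj.reachable (by exact hadj))

lemma g2_connected {P : Finset (ℕ × ℕ)} (hne : P.Nonempty) (hconn : Connected2 P) :
    (G2 P).Connected := by
  rw [SimpleGraph.connected_iff]
  obtain ⟨w, hw⟩ := hne
  refine ⟨fun a b => ?_, ⟨⟨w, hw⟩⟩⟩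
  have := rtg_reachable (hconn a.1 a.2 b.1 b.2) a.2 b.2
  simpa using this

lemma poly2_lb {b k : ℕ} {P : Finset (ℕ × ℕ)} (hne : P.Nonempty)
    (hconn : Connected2 P) (hins : Inscribed2 b k P) :
    b + k ≤ P.card + 1 := by
  have h1 := conn_card_le_aux (Fintype.card {y // y ∈ P}) _ inferInstance (G2 P) rfl
    (g2_connected hne hconn)
  have h2 : Fintype.card {y // y ∈ P} = P.card := Fintype.card_coe P
  have h3 := edge_bound P
  have h4 := EH_card P
  have h5 := EV_card P
  rw [image_fst_eq hconn hins, Finset.card_range] at h4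
  rw [image_snd_eq hconn hins, Finset.card_range] at h5
  omega
def relA (P : Finset (ℕ × ℕ)) (x : ℕ × ℕ) (u v : ℕ × ℕ) : Prop :=
  u ∈ P ∧ v ∈ P ∧ u ≠ x ∧ v ≠ x ∧ Adj2 u v

lemma relA_symm {P : Finset (ℕ × ℕ)} {x : ℕ × ℕ} : Symmetric (relA P x) :=
  fun _ _ h => ⟨h.2.1, h.1, h.2.2.2.1, h.2.2.1, adj2_symm h.2.2.2.2⟩

lemma rtgA_symm {P : Finset (ℕ × ℕ)} {x u v : ℕ × ℕ}
    (h : ReflTransGen (relA P x) u v) : ReflTransGen (relA P x) v u :=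
  by haveI : Std.Symm (relA P x) := ⟨relA_symm⟩; exact (Relation.ReflTransGen.symmetric).symm _ _ h

lemma nbr_exists {P : Finset (ℕ × ℕ)} {x y : ℕ × ℕ} (hconn : Connected2 P)
    (hx : x ∈ P) (hy : y ∈ P) (hyx : y ≠ x) :
    ∃ z, z ∈ P ∧ Adj2 x z ∧ ReflTransGen (relA P x) y z := by
  have h : ReflTransGen (rel2 P) y x := hconn y hy x hx
  clear hy
  induction h using ReflTransGen.head_induction_on with
  | refl => exact absurd rfl hyx
  | @head a c h' hrest ih =>
    by_cases hcx : c = x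
    · subst hcx
      exact ⟨a, h'.1, adj2_symm h'.2.2, ReflTransGen.refl⟩
    · obtain ⟨z, hzP, hza, hzr⟩ := ih hcx
      exact ⟨z, hzP, hza,
        ReflTransGen.head ⟨h'.1, h'.2.1, hyx, hcx, h'.2.2⟩ hzr⟩

lemma nbr_unique {b k : ℕ} {P : Finset (ℕ × ℕ)} (hb : 1 ≤ b) (hk : 1 ≤ k)
    (hP : MinPoly2D b k P) {x z1 z2 : ℕ × ℕ}
    (hx : x ∈ P) (hz1 : z1 ∈ P) (ha1 : Adj2 x z1) (hz2 : z2 ∈ P) (ha2 : Adj2 x z2)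
    (h12 : ReflTransGen (relA P x) z1 z2) : z1 = z2 := by
  by_contra hne
  obtain ⟨hPne, hconn, hins, hcard⟩ := hP
  have hxz1 : x ≠ z1 := fun h => adj2_irrefl x (h ▸ ha1)
  have hxz2 : x ≠ z2 := fun h => adj2_irrefl x (h ▸ ha2)
  set D : SimpleGraph {y // y ∈ P} :=
    G2 P \ SimpleGraph.fromEdgeSet {s(⟨x, hx⟩, ⟨z1, hz1⟩)} with hD
  have hDadj : ∀ (u v : {y // y ∈ P}), Adj2 u.1 v.1 →
      ¬ (s((u : {y // y ∈ P}), v) = s(⟨x, hx⟩, ⟨z1, hz1⟩)) → D.Adj u v := by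
    intro u v hadj hnd
    rw [hD, SimpleGraph.sdiff_adj]
    refine ⟨hadj, ?_⟩
    rw [SimpleGraph.fromEdgeSet_adj]
    rintro ⟨h1, -⟩
    exact hnd h1
  -- a path avoiding x transfers to D
  have hA_D : ∀ {u v : ℕ × ℕ}, ReflTransGen (relA P x) u v → ∀ (hu : u ∈ P) (hv : v ∈ P),
      D.Reachable ⟨u, hu⟩ ⟨v, hv⟩ := by
    intro u v h
    induction h with
    | refl => intro hu hv; rfl
    | @tail p q hup hpq ih =>
      intro hu hv
      obtain ⟨hpP, hqP, hpx, hqx, hadj⟩ := hpq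
      refine (ih hu hpP).trans (SimpleGraph.Adj.reachable (hDadj _ _ hadj ?_))
      rw [Sym2.eq_iff]
      rintro (⟨h1, -⟩ | ⟨-, h2⟩)
      · exact hpx (congrArg Subtype.val h1)
      · exact hqx (congrArg Subtype.val h2)
  -- rerouting the deleted edge
  have hre : D.Reachable ⟨x, hx⟩ ⟨z1, hz1⟩ := by
    have hstep : D.Adj ⟨x, hx⟩ ⟨z2, hz2⟩ := by
      apply hDadj _ _ ha2
      rw [Sym2.eq_iff]
      rintro (⟨-, h2⟩ | ⟨h1, -⟩)
      · exact hne (congrArg Subtype.val h2).symm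
      · exact hxz1 (congrArg Subtype.val h1)
    exact (SimpleGraph.Adj.reachable hstep).trans
      (hA_D (rtgA_symm h12) hz2 hz1)
  -- D is connected
  have hDconn : D.Connected := by
    rw [SimpleGraph.connected_iff]
    obtain ⟨w, hw⟩ := hPne
    refine ⟨?_, ⟨⟨w, hw⟩⟩⟩
    have htrans : ∀ {u v : ℕ × ℕ}, ReflTransGen (rel2 P) u v →
        ∀ (hu : u ∈ P) (hv : v ∈ P), D.Reachable ⟨u, hu⟩ ⟨v, hv⟩ := by
      intro u v h
      induction h with
      | refl => intro hu hv; rfl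
      | @tail p q hup hpq ih =>
        intro hu hv
        obtain ⟨hpP, hqP, hadj⟩ := hpq
        refine (ih hu hpP).trans ?_
        by_cases hdel : s((⟨p, hpP⟩ : {y // y ∈ P}), (⟨q, hqP⟩ : {y // y ∈ P}))
            = s(⟨x, hx⟩, ⟨z1, hz1⟩)
        · rw [Sym2.eq_iff] at hdel
          rcases hdel with ⟨h1, h2⟩ | ⟨h1, h2⟩
          · have e1 : p = x := congrArg Subtype.val h1
            have e2 : q = z1 := congrArg Subtype.val h2
            subst e1; subst e2
            exact hre
          · have e1 : p = z1 := congrArg Subtype.val h1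
            have e2 : q = x := congrArg Subtype.val h2
            subst e1; subst e2
            exact hre.symm
        · exact SimpleGraph.Adj.reachable (hDadj _ _ hadj hdel)
    intro a b
    have := htrans (hconn a.1 a.2 b.1 b.2) a.2 b.2
    simpa using this
  -- edge counting contradiction
  have hedge : s(⟨x, hx⟩, ⟨z1, hz1⟩) ∈ (G2 P).edgeSet := ha1
  have hDedges : D.edgeSet = (G2 P).edgeSet \ {s(⟨x, hx⟩, ⟨z1, hz1⟩)} := by
    rw [hD, SimpleGraph.edgeSet_sdiff, SimpleGraph.edgeSet_fromEdgeSet]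
    have : ({s(⟨x, hx⟩, ⟨z1, hz1⟩)} : Set (Sym2 {y // y ∈ P})) \ Sym2.diagSet
        = {s(⟨x, hx⟩, ⟨z1, hz1⟩)} := by
      have hnd : ¬ (s(⟨x, hx⟩, ⟨z1, hz1⟩) : Sym2 {y // y ∈ P}).IsDiag := by
        rw [Sym2.mk_isDiag_iff]
        intro h; exact hxz1 (congrArg Subtype.val h)
      ext e
      simp only [Set.mem_diff, Set.mem_singleton_iff, Sym2.mem_diagSet]
      constructor
      · exact fun h => h.1
      · rintro rfl; exact ⟨rfl, hnd⟩
    rw [this]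
  have hDcard : D.edgeSet.ncard + 1 = (G2 P).edgeSet.ncard := by
    rw [hDedges, Set.ncard_diff_singleton_of_mem hedge]
    have hpos : 0 < (G2 P).edgeSet.ncard :=
      Set.ncard_pos ((G2 P).edgeSet.toFinite) |>.mpr ⟨_, hedge⟩
    omega
  have h1 := conn_card_le_aux (Fintype.card {y // y ∈ P}) _ inferInstance D rfl hDconn
  have h2 : Fintype.card {y // y ∈ P} = P.card := Fintype.card_coe P
  have h3 := edge_bound P
  have h4 := EH_card P
  have h5 := EV_card P
  rw [image_fst_eq hconn hins, Finset.card_range] at h4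
  rw [image_snd_eq hconn hins, Finset.card_range] at h5
  omega

def rel3 (Q : Finset (ℕ × ℕ × ℕ)) (u v : ℕ × ℕ × ℕ) : Prop := u ∈ Q ∧ v ∈ Q ∧ Adj3 u v

noncomputable def proj (Q : Finset (ℕ × ℕ × ℕ)) : Finset (ℕ × ℕ) := Q.image Prod.snd

noncomputable def nbrF (P : Finset (ℕ × ℕ)) (x y : ℕ × ℕ) : ℕ × ℕ :=
  if h : ∃ z, z ∈ P ∧ Adj2 x z ∧ ReflTransGen (relA P x) y z then h.choose else (0, 0)

lemma nbrF_eq {b k : ℕ} {P : Finset (ℕ × ℕ)} (hb : 1 ≤ b) (hk : 1 ≤ k)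
    (hP : MinPoly2D b k P) {x z y : ℕ × ℕ} (hx : x ∈ P)
    (hz : z ∈ P) (haz : Adj2 x z) (hr : ReflTransGen (relA P x) y z) :
    nbrF P x y = z := by
  have h : ∃ z, z ∈ P ∧ Adj2 x z ∧ ReflTransGen (relA P x) y z := ⟨z, hz, haz, hr⟩
  rw [nbrF, dif_pos h]
  obtain ⟨h1, h2, h3⟩ := h.choose_spec
  exact nbr_unique hb hk hP hx h1 h2 hz haz ((rtgA_symm h3).trans hr)

lemma nbrF_spec {P : Finset (ℕ × ℕ)} {x y : ℕ × ℕ} (hconn : Connected2 P)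
    (hx : x ∈ P) (hy : y ∈ P) (hyx : y ≠ x) :
    nbrF P x y ∈ P ∧ Adj2 x (nbrF P x y) ∧ ReflTransGen (relA P x) y (nbrF P x y) := by
  have h : ∃ z, z ∈ P ∧ Adj2 x z ∧ ReflTransGen (relA P x) y z :=
    nbr_exists hconn hx hy hyx
  rw [nbrF, dif_pos h]
  exact h.choose_spec

lemma rel3_map {Q : Finset (ℕ × ℕ × ℕ)} {u v : ℕ × ℕ × ℕ}
    (h : ReflTransGen (rel3 Q) u v) :
    ReflTransGen (rel2 (proj Q)) u.2 v.2 := by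
  induction h with
  | refl => exact ReflTransGen.refl
  | @tail p q hup hpq ih =>
    obtain ⟨hpQ, hqQ, hadj⟩ := hpq
    rcases hadj with ⟨-, hadj2⟩ | ⟨heq, -⟩
    · exact ih.tail ⟨Finset.mem_image_of_mem _ hpQ, Finset.mem_image_of_mem _ hqQ, hadj2⟩
    · exact heq ▸ ih

lemma proj_minpoly {b k : ℕ} (hb : 1 ≤ b) (hk : 1 ≤ k) {Q : Finset (ℕ × ℕ × ℕ)}
    (hQ : MinPoly3D 2 b k Q) : MinPoly2D b k (proj Q) := by
  obtain ⟨hQne, hQconn, hQins, hQcard⟩ := hQ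
  obtain ⟨hbd, hl0, hl1, hb0, hb1, hk0, hk1⟩ := hQins
  have hQc : Q.card = b + k := by omega
  have hne : (proj Q).Nonempty := hQne.image _
  have hconn : Connected2 (proj Q) := by
    intro a ha c hc
    obtain ⟨u, hu, rfl⟩ := Finset.mem_image.mp ha
    obtain ⟨v, hv, rfl⟩ := Finset.mem_image.mp hc
    exact rel3_map (hQconn u hu v hv)
  have hins : Inscribed2 b k (proj Q) := by
    refine ⟨?_, ?_, ?_, ?_, ?_⟩
    · intro c hc
      obtain ⟨u, hu, rfl⟩ := Finset.mem_image.mp hc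
      exact ⟨(hbd u hu).2.1, (hbd u hu).2.2⟩
    · obtain ⟨c, hc, hc1⟩ := hb0
      exact ⟨c.2, Finset.mem_image_of_mem _ hc, hc1⟩
    · obtain ⟨c, hc, hc1⟩ := hb1
      exact ⟨c.2, Finset.mem_image_of_mem _ hc, hc1⟩
    · obtain ⟨c, hc, hc1⟩ := hk0
      exact ⟨c.2, Finset.mem_image_of_mem _ hc, hc1⟩
    · obtain ⟨c, hc, hc1⟩ := hk1
      exact ⟨c.2, Finset.mem_image_of_mem _ hc, hc1⟩
  refine ⟨hne, hconn, hins, ?_⟩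
  have hub : (proj Q).card ≤ Q.card := Finset.card_image_le
  have hlb := poly2_lb hne hconn hins
  have hneq : (proj Q).card ≠ Q.card := by
    intro heq
    have hinj : Set.InjOn Prod.snd (Q : Set (ℕ × ℕ × ℕ)) :=
      Finset.card_image_iff.mp heq
    have hconst : ∀ {u v : ℕ × ℕ × ℕ}, ReflTransGen (rel3 Q) u v → u.1 = v.1 := by
      intro u v h
      induction h with
      | refl => rfl
      | @tail p q hup hpq ih =>
        obtain ⟨hpQ, hqQ, hadj⟩ := hpq
        rcases hadj with ⟨heq1, -⟩ | ⟨heq2, -⟩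
        · exact ih.trans heq1
        · have : p = q := hinj hpQ hqQ heq2
          exact ih.trans (congrArg Prod.fst this)
    obtain ⟨c0, hc0, hc01⟩ := hl0
    obtain ⟨c1, hc1, hc11⟩ := hl1
    have := hconst (hQconn c0 hc0 c1 hc1)
    omega
  omega

lemma two_layers {b k : ℕ} {Q : Finset (ℕ × ℕ × ℕ)} (hQ : MinPoly3D 2 b k Q)
    {u v : ℕ × ℕ × ℕ} (hu : u ∈ Q) (hv : v ∈ Q) (h2 : u.2 = v.2) (hne : u ≠ v) :
    ((0 : ℕ), u.2) ∈ Q ∧ ((1 : ℕ), u.2) ∈ Q := by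
  obtain ⟨-, -, ⟨hbd, -⟩, -⟩ := hQ
  have hu1 : u.1 < 2 := (hbd u hu).1
  have hv1 : v.1 < 2 := (hbd v hv).1
  have hne1 : u.1 ≠ v.1 := by
    intro h1
    exact hne (Prod.ext h1 h2)
  have hueta : (u.1, u.2) = u := rfl
  have hveta : (v.1, v.2) = v := rfl
  have hu2 : u.1 = 0 ∨ u.1 = 1 := by omega
  have hv2 : v.1 = 0 ∨ v.1 = 1 := by omega
  rcases hu2 with h | h <;> rcases hv2 with h' | h'
  · omega
  · constructor
    · rw [← h, hueta]; exact hu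
    · rw [h2, ← h', hveta]; exact hv
  · constructor
    · rw [h2, ← h', hveta]; exact hv
    · rw [← h, hueta]; exact hu
  · omega

lemma doubled_exists {b k : ℕ} (hb : 1 ≤ b) (hk : 1 ≤ k) {Q : Finset (ℕ × ℕ × ℕ)}
    (hQ : MinPoly3D 2 b k Q) : ∃ y, ((0 : ℕ), y) ∈ Q ∧ ((1 : ℕ), y) ∈ Q := by
  have hproj := proj_minpoly hb hk hQ
  have hcardP : (proj Q).card = b + k - 1 := hproj.2.2.2
  have hcardQ : Q.card = b + k := by
    have := hQ.2.2.2; omega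
  have hninj : ¬ Set.InjOn Prod.snd (Q : Set (ℕ × ℕ × ℕ)) := by
    intro hinj
    have := Finset.card_image_iff.mpr hinj
    rw [show Q.image Prod.snd = proj Q from rfl] at this
    omega
  rw [Set.InjOn] at hninj
  push_neg at hninj
  obtain ⟨u, hu, v, hv, h2, hne⟩ := hninj
  obtain ⟨h0, h1⟩ := two_layers hQ hu hv h2 hne
  exact ⟨u.2, h0, h1⟩

lemma doubled_unique {b k : ℕ} (hb : 1 ≤ b) (hk : 1 ≤ k) {Q : Finset (ℕ × ℕ × ℕ)}
    (hQ : MinPoly3D 2 b k Q) {y1 y2 : ℕ × ℕ}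
    (h1 : ((0 : ℕ), y1) ∈ Q ∧ ((1 : ℕ), y1) ∈ Q)
    (h2 : ((0 : ℕ), y2) ∈ Q ∧ ((1 : ℕ), y2) ∈ Q) : y1 = y2 := by
  by_contra hne
  have hproj := proj_minpoly hb hk hQ
  have hcardP : (proj Q).card = b + k - 1 := hproj.2.2.2
  have hcardQ : Q.card = b + k := by
    have := hQ.2.2.2; omega
  set S : Finset (ℕ × ℕ × ℕ) := {((1 : ℕ), y1), ((1 : ℕ), y2)} with hS
  have hSsub : S ⊆ Q := by
    intro c hc
    rw [hS, Finset.mem_insert, Finset.mem_singleton] at hc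
    rcases hc with rfl | rfl
    · exact h1.2
    · exact h2.2
  have hScard : S.card = 2 := by
    rw [hS, Finset.card_insert_of_notMem, Finset.card_singleton]
    rw [Finset.mem_singleton]
    intro h
    exact hne (congrArg Prod.snd h)
  have hsub : proj Q ⊆ (Q \ S).image Prod.snd := by
    intro c hc
    obtain ⟨u, hu, rfl⟩ := Finset.mem_image.mp hc
    by_cases hy1 : u.2 = y1
    · refine Finset.mem_image.mpr ⟨((0 : ℕ), y1), ?_, hy1.symm⟩
      rw [Finset.mem_sdiff]
      refine ⟨h1.1, ?_⟩
      rw [hS, Finset.mem_insert, Finset.mem_singleton]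
      rintro (h | h) <;> simp at h
    · by_cases hy2 : u.2 = y2
      · refine Finset.mem_image.mpr ⟨((0 : ℕ), y2), ?_, hy2.symm⟩
        rw [Finset.mem_sdiff]
        refine ⟨h2.1, ?_⟩
        rw [hS, Finset.mem_insert, Finset.mem_singleton]
        rintro (h | h) <;> simp at h
      · refine Finset.mem_image.mpr ⟨u, ?_, rfl⟩
        rw [Finset.mem_sdiff]
        refine ⟨hu, ?_⟩
        rw [hS, Finset.mem_insert, Finset.mem_singleton]
        rintro (h | h)
        · exact hy1 (congrArg Prod.snd h)
        · exact hy2 (congrArg Prod.snd h)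
  have hcount : (proj Q).card ≤ Q.card - 2 := by
    calc (proj Q).card ≤ ((Q \ S).image Prod.snd).card := Finset.card_le_card hsub
      _ ≤ (Q \ S).card := Finset.card_image_le
      _ = Q.card - 2 := by rw [Finset.card_sdiff_of_subset hSsub, hScard]
  omega

noncomputable def dblC (Q : Finset (ℕ × ℕ × ℕ)) : ℕ × ℕ :=
  if h : ∃ y, ((0 : ℕ), y) ∈ Q ∧ ((1 : ℕ), y) ∈ Q then h.choose else (0, 0)

lemma dblC_spec {b k : ℕ} (hb : 1 ≤ b) (hk : 1 ≤ k) {Q : Finset (ℕ × ℕ × ℕ)}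
    (hQ : MinPoly3D 2 b k Q) :
    ((0 : ℕ), dblC Q) ∈ Q ∧ ((1 : ℕ), dblC Q) ∈ Q := by
  have h := doubled_exists hb hk hQ
  rw [dblC, dif_pos h]
  exact h.choose_spec

lemma dblC_eq {b k : ℕ} (hb : 1 ≤ b) (hk : 1 ≤ k) {Q : Finset (ℕ × ℕ × ℕ)}
    (hQ : MinPoly3D 2 b k Q) {y : ℕ × ℕ}
    (h : ((0 : ℕ), y) ∈ Q ∧ ((1 : ℕ), y) ∈ Q) : dblC Q = y :=
  doubled_unique hb hk hQ (dblC_spec hb hk hQ) h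

lemma only_dbl {b k : ℕ} (hb : 1 ≤ b) (hk : 1 ≤ k) {Q : Finset (ℕ × ℕ × ℕ)}
    (hQ : MinPoly3D 2 b k Q) {u v : ℕ × ℕ × ℕ} (hu : u ∈ Q) (hv : v ∈ Q)
    (h2 : u.2 = v.2) (hne : u ≠ v) : u.2 = dblC Q :=
  (dblC_eq hb hk hQ (two_layers hQ hu hv h2 hne)).symm

lemma first_entry3 {b k : ℕ} (hb : 1 ≤ b) (hk : 1 ≤ k) {Q : Finset (ℕ × ℕ × ℕ)}
    (hQ : MinPoly3D 2 b k Q) {c d : ℕ × ℕ × ℕ}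
    (h : ReflTransGen (rel3 Q) c d) (hd : d.2 = dblC Q) :
    c ∈ Q → c.2 ≠ dblC Q →
    ∃ z, z ∈ proj Q ∧ Adj2 (dblC Q) z ∧
      ReflTransGen (relA (proj Q) (dblC Q)) c.2 z ∧ (c.1, z) ∈ Q := by
  induction h using ReflTransGen.head_induction_on with
  | refl => intro _ hcx; exact absurd hd hcx
  | @head a a' h' hrest ih =>
    intro haQ hax
    obtain ⟨haQ', ha'Q, hadj⟩ := h'
    rcases hadj with ⟨heq1, hadj2⟩ | ⟨heq2, hlay⟩
    · by_cases ha'x : a'.2 = dblC Q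
      · refine ⟨a.2, Finset.mem_image_of_mem _ haQ, ?_, ReflTransGen.refl, ?_⟩
        · rw [← ha'x]; exact adj2_symm hadj2
        · have : (a.1, a.2) = a := rfl
          rw [this]; exact haQ
      · obtain ⟨z, hz1, hz2, hz3, hz4⟩ := ih ha'Q ha'x
        refine ⟨z, hz1, hz2, ?_, ?_⟩
        · exact ReflTransGen.head
            ⟨Finset.mem_image_of_mem _ haQ, Finset.mem_image_of_mem _ ha'Q, hax, ha'x, hadj2⟩ hz3
        · rw [heq1]; exact hz4
    · exfalso
      have hne : a ≠ a' := by
        intro h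
        rw [h] at hlay
        omega
      exact hax (only_dbl hb hk hQ haQ ha'Q heq2 hne)

lemma layer_nbr {b k : ℕ} (hb : 1 ≤ b) (hk : 1 ≤ k) {Q : Finset (ℕ × ℕ × ℕ)}
    (hQ : MinPoly3D 2 b k Q) {l : ℕ} {y : ℕ × ℕ} (hy : (l, y) ∈ Q)
    (hyx : y ≠ dblC Q) : (l, nbrF (proj Q) (dblC Q) y) ∈ Q := by
  have hx0 : ((0 : ℕ), dblC Q) ∈ Q := (dblC_spec hb hk hQ).1
  have hpath := hQ.2.1 (l, y) hy ((0 : ℕ), dblC Q) hx0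
  obtain ⟨z, hz1, hz2, hz3, hz4⟩ := first_entry3 hb hk hQ hpath rfl hy hyx
  have hxP : dblC Q ∈ proj Q := Finset.mem_image_of_mem _ hx0
  have := nbrF_eq hb hk (proj_minpoly hb hk hQ) hxP hz1 hz2 hz3
  rw [this]
  exact hz4

lemma adj3_symm {u v : ℕ × ℕ × ℕ} (h : Adj3 u v) : Adj3 v u := by
  rcases h with ⟨h1, h2⟩ | ⟨h1, h2⟩
  · exact Or.inl ⟨h1.symm, adj2_symm h2⟩
  · exact Or.inr ⟨h1.symm, by omega⟩

lemma rel3_symm {Q : Finset (ℕ × ℕ × ℕ)} : Symmetric (rel3 Q) :=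
  fun _ _ h => ⟨h.2.1, h.1, adj3_symm h.2.2⟩

noncomputable def liftQ (P : Finset (ℕ × ℕ)) (x : ℕ × ℕ) (g : ℕ × ℕ → Bool) :
    Finset (ℕ × ℕ × ℕ) :=
  ((P.erase x).image (fun y => ((cond (g (nbrF P x y)) 1 0 : ℕ), y))) ∪
    {((0 : ℕ), x), ((1 : ℕ), x)}

lemma mem_liftQ {P : Finset (ℕ × ℕ)} {x : ℕ × ℕ} {g : ℕ × ℕ → Bool} {c : ℕ × ℕ × ℕ} :
    c ∈ liftQ P x g ↔ ((c = ((0 : ℕ), x) ∨ c = ((1 : ℕ), x)) ∨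
      (c.2 ∈ P ∧ c.2 ≠ x ∧ c = ((cond (g (nbrF P x c.2)) 1 0 : ℕ), c.2))) := by
  unfold liftQ
  rw [Finset.mem_union, Finset.mem_insert, Finset.mem_singleton, Finset.mem_image]
  constructor
  · rintro (⟨y, hy, rfl⟩ | h)
    · rw [Finset.mem_erase] at hy
      exact Or.inr ⟨hy.2, hy.1, rfl⟩
    · exact Or.inl h
  · rintro (h | ⟨h1, h2, h3⟩)
    · exact Or.inr h
    · exact Or.inl ⟨c.2, Finset.mem_erase.mpr ⟨h2, h1⟩, h3.symm⟩

lemma liftQ_mem_x {P : Finset (ℕ × ℕ)} {x : ℕ × ℕ} {g : ℕ × ℕ → Bool} {l : ℕ}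
    (hl : l < 2) : (l, x) ∈ liftQ P x g := by
  rw [mem_liftQ]
  have : l = 0 ∨ l = 1 := by omega
  rcases this with rfl | rfl
  · exact Or.inl (Or.inl rfl)
  · exact Or.inl (Or.inr rfl)

lemma liftQ_mem_cell {P : Finset (ℕ × ℕ)} {x : ℕ × ℕ} {g : ℕ × ℕ → Bool} {y : ℕ × ℕ}
    (hy : y ∈ P) (hyx : y ≠ x) :
    ((cond (g (nbrF P x y)) 1 0 : ℕ), y) ∈ liftQ P x g := by
  rw [mem_liftQ]
  exact Or.inr ⟨hy, hyx, rfl⟩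

lemma liftQ_proj {P : Finset (ℕ × ℕ)} {x : ℕ × ℕ} {g : ℕ × ℕ → Bool} (hx : x ∈ P) :
    proj (liftQ P x g) = P := by
  ext c
  constructor
  · intro hc
    obtain ⟨u, hu, rfl⟩ := Finset.mem_image.mp hc
    rw [mem_liftQ] at hu
    rcases hu with (rfl | rfl) | ⟨h1, -, -⟩
    · exact hx
    · exact hx
    · exact h1
  · intro hc
    by_cases hcx : c = x
    · subst hcx
      exact Finset.mem_image_of_mem _ (liftQ_mem_x (by omega : (0:ℕ) < 2))
    · exact Finset.mem_image_of_mem _ (liftQ_mem_cell hc hcx)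

lemma liftQ_card {P : Finset (ℕ × ℕ)} {x : ℕ × ℕ} {g : ℕ × ℕ → Bool} (hx : x ∈ P) :
    (liftQ P x g).card = P.card + 1 := by
  unfold liftQ
  rw [Finset.card_union_of_disjoint, Finset.card_image_of_injOn]
  · rw [Finset.card_erase_of_mem hx]
    have h2 : ({((0 : ℕ), x), ((1 : ℕ), x)} : Finset (ℕ × ℕ × ℕ)).card = 2 := by
      rw [Finset.card_insert_of_notMem (by simp), Finset.card_singleton]
    rw [h2]
    have : 0 < P.card := Finset.card_pos.mpr ⟨x, hx⟩
    omega
  · intro u _ v _ huv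
    exact congrArg Prod.snd huv
  · rw [Finset.disjoint_right]
    intro c hc him
    obtain ⟨u, hu, rfl⟩ := Finset.mem_image.mp him
    rw [Finset.mem_erase] at hu
    rw [Finset.mem_insert, Finset.mem_singleton] at hc
    rcases hc with h | h <;> exact hu.1 (congrArg Prod.snd h)

lemma lift_path {b k : ℕ} (hb : 1 ≤ b) (hk : 1 ≤ k) {P : Finset (ℕ × ℕ)} {x : ℕ × ℕ}
    (hP : MinPoly2D b k P) (hx : x ∈ P) (g : ℕ × ℕ → Bool) {z : ℕ × ℕ}
    (hz : z ∈ P) (haz : Adj2 x z) :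
    ∀ {u : ℕ × ℕ}, ReflTransGen (relA P x) u z → u ∈ P → u ≠ x →
      ReflTransGen (rel3 (liftQ P x g)) ((cond (g z) 1 0 : ℕ), u)
        ((cond (g z) 1 0 : ℕ), z) := by
  intro u h
  induction h using ReflTransGen.head_induction_on with
  | refl => intro _ _; exact ReflTransGen.refl
  | @head a a' h' hrest ih =>
    intro haP hax
    have ha'P := h'.2.1
    have ha'x := h'.2.2.2.1
    have hadj := h'.2.2.2.2
    have hna : nbrF P x a = z :=
      nbrF_eq hb hk hP hx hz haz (ReflTransGen.head h' hrest)
    have hna' : nbrF P x a' = z := nbrF_eq hb hk hP hx hz haz hrest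
    have hma : ((cond (g z) 1 0 : ℕ), a) ∈ liftQ P x g := by
      have := liftQ_mem_cell (g := g) haP hax
      rw [hna] at this; exact this
    have hma' : ((cond (g z) 1 0 : ℕ), a') ∈ liftQ P x g := by
      have := liftQ_mem_cell (g := g) ha'P ha'x
      rw [hna'] at this; exact this
    exact ReflTransGen.head ⟨hma, hma', Or.inl ⟨rfl, hadj⟩⟩ (ih ha'P ha'x)

lemma liftQ_minpoly {b k : ℕ} (hb : 1 ≤ b) (hk : 1 ≤ k) {P : Finset (ℕ × ℕ)} {x : ℕ × ℕ}
    (hP : MinPoly2D b k P) (hx : x ∈ P) (g : ℕ × ℕ → Bool) :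
    MinPoly3D 2 b k (liftQ P x g) := by
  obtain ⟨hPne, hconn, hins, hcard⟩ := hP
  have hcond2 : ∀ bb : Bool, (cond bb 1 0 : ℕ) < 2 := by intro bb; cases bb <;> simp
  refine ⟨⟨((0:ℕ), x), liftQ_mem_x (by omega)⟩, ?_, ?_, ?_⟩
  · -- connectivity
    have hkey : ∀ c ∈ liftQ P x g, ReflTransGen (rel3 (liftQ P x g)) c ((0 : ℕ), x) := by
      intro c hc
      have hc' := hc
      rw [mem_liftQ] at hc'
      have hvert : rel3 (liftQ P x g) ((1 : ℕ), x) ((0 : ℕ), x) :=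
        ⟨liftQ_mem_x (by omega), liftQ_mem_x (by omega), Or.inr ⟨rfl, by omega⟩⟩
      rcases hc' with (rfl | rfl) | ⟨h1, h2, h3⟩
      · exact ReflTransGen.refl
      · exact ReflTransGen.single hvert
      · set z := nbrF P x c.2 with hz
        obtain ⟨hzP, hzadj, hzr⟩ := nbrF_spec hconn hx h1 h2
        have hpath := lift_path hb hk ⟨hPne, hconn, hins, hcard⟩ hx g hzP hzadj hzr h1 h2
        rw [← hz] at hpath
        have hstep : rel3 (liftQ P x g) ((cond (g z) 1 0 : ℕ), z) ((cond (g z) 1 0 : ℕ), x) := by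
          refine ⟨?_, liftQ_mem_x (hcond2 _), Or.inl ⟨rfl, adj2_symm hzadj⟩⟩
          have hzx : z ≠ x := by
            intro h; rw [← hz, h] at hzadj; exact adj2_irrefl x hzadj
          have := liftQ_mem_cell (g := g) hzP hzx
          have hnz : nbrF P x z = z :=
            nbrF_eq hb hk ⟨hPne, hconn, hins, hcard⟩ hx hzP hzadj ReflTransGen.refl
          rw [hnz] at this
          exact this
        have hstep2 : ReflTransGen (rel3 (liftQ P x g)) ((cond (g z) 1 0 : ℕ), x) ((0 : ℕ), x) := by
          cases hgz : g z
          · simp only [cond_false]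
            exact ReflTransGen.refl
          · simp only [cond_true]
            exact ReflTransGen.single hvert
        rw [h3]
        exact (hpath.tail hstep).trans hstep2
    intro a ha c hc
    haveI : Std.Symm (rel3 (liftQ P x g)) := ⟨rel3_symm⟩
    exact (hkey a ha).trans ((Relation.ReflTransGen.symmetric).symm _ _ (hkey c hc))
  · -- inscribed
    have hproj : ∀ c ∈ P, ∃ q ∈ liftQ P x g, q.2 = c := by
      intro c hc
      have : c ∈ proj (liftQ P x g) := by rw [liftQ_proj hx]; exact hc
      obtain ⟨q, hq, hq2⟩ := Finset.mem_image.mp this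
      exact ⟨q, hq, hq2⟩
    obtain ⟨hbd, ⟨cb0, hcb0, hcb01⟩, ⟨cb1, hcb1, hcb11⟩, ⟨ck0, hck0, hck01⟩,
      ⟨ck1, hck1, hck11⟩⟩ := hins
    refine ⟨?_, ?_, ?_, ?_, ?_, ?_, ?_⟩
    · intro c hc
      rw [mem_liftQ] at hc
      rcases hc with (rfl | rfl) | ⟨h1, -, h3⟩
      · exact ⟨by omega, (hbd x hx).1, (hbd x hx).2⟩
      · exact ⟨by omega, (hbd x hx).1, (hbd x hx).2⟩
      · rw [h3]
        exact ⟨hcond2 _, (hbd c.2 h1).1, (hbd c.2 h1).2⟩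
    · exact ⟨((0:ℕ), x), liftQ_mem_x (by omega), rfl⟩
    · exact ⟨((1:ℕ), x), liftQ_mem_x (by omega), rfl⟩
    · obtain ⟨q, hq, hq2⟩ := hproj cb0 hcb0
      exact ⟨q, hq, by rw [hq2]; exact hcb01⟩
    · obtain ⟨q, hq, hq2⟩ := hproj cb1 hcb1
      exact ⟨q, hq, by rw [hq2]; exact hcb11⟩
    · obtain ⟨q, hq, hq2⟩ := hproj ck0 hck0
      exact ⟨q, hq, by rw [hq2]; exact hck01⟩
    · obtain ⟨q, hq, hq2⟩ := hproj ck1 hck1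
      exact ⟨q, hq, by rw [hq2]; exact hck11⟩
  · rw [liftQ_card hx, hcard]
    omega

lemma fiber_eq_lift {b k : ℕ} (hb : 1 ≤ b) (hk : 1 ≤ k) {Q : Finset (ℕ × ℕ × ℕ)}
    (hQ : MinPoly3D 2 b k Q) :
    Q = liftQ (proj Q) (dblC Q) (fun z => decide (((1 : ℕ), z) ∈ Q)) := by
  have hPmin := proj_minpoly hb hk hQ
  have hconn2 := hPmin.2.1
  have hxP : dblC Q ∈ proj Q := Finset.mem_image_of_mem _ (dblC_spec hb hk hQ).1
  have hbd := hQ.2.2.1.1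
  ext c
  constructor
  · intro hc
    have hc2P : c.2 ∈ proj Q := Finset.mem_image_of_mem _ hc
    have hc1 : c.1 < 2 := (hbd c hc).1
    rw [mem_liftQ]
    by_cases hcx : c.2 = dblC Q
    · left
      have : c.1 = 0 ∨ c.1 = 1 := by omega
      rcases this with h | h
      · exact Or.inl (Prod.ext h hcx)
      · exact Or.inr (Prod.ext h hcx)
    · right
      refine ⟨hc2P, hcx, ?_⟩
      set z := nbrF (proj Q) (dblC Q) c.2 with hz
      obtain ⟨hzP, hzadj, -⟩ := nbrF_spec hconn2 hxP hc2P hcx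
      rw [← hz] at hzP hzadj
      have hzx : z ≠ dblC Q := by
        intro h; rw [h] at hzadj; exact adj2_irrefl _ hzadj
      have hceta : (c.1, c.2) = c := rfl
      have hlz : (c.1, z) ∈ Q := by
        rw [hz]
        exact layer_nbr hb hk hQ (by rw [hceta]; exact hc) hcx
      have : c.1 = 0 ∨ c.1 = 1 := by omega
      rcases this with h | h
      · have hnot : ¬ ((1 : ℕ), z) ∈ Q := by
          intro h1
          apply hzx
          apply only_dbl hb hk hQ (u := ((0:ℕ), z)) (v := ((1:ℕ), z)) _ h1 rfl (by simp)
          rw [← h] at *; exact hlz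
        rw [show (decide (((1 : ℕ), z) ∈ Q)) = false from decide_eq_false hnot]
        exact Prod.ext (by rw [h]; rfl) rfl
      · have hyes : ((1 : ℕ), z) ∈ Q := by rw [← h]; exact hlz
        rw [show (decide (((1 : ℕ), z) ∈ Q)) = true from decide_eq_true hyes]
        exact Prod.ext (by rw [h]; rfl) rfl
  · intro hc
    rw [mem_liftQ] at hc
    rcases hc with (rfl | rfl) | ⟨h1, h2, h3⟩
    · exact (dblC_spec hb hk hQ).1
    · exact (dblC_spec hb hk hQ).2
    · set z := nbrF (proj Q) (dblC Q) c.2 with hz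
      obtain ⟨hzP, hzadj, -⟩ := nbrF_spec hconn2 hxP h1 h2
      rw [← hz] at hzP hzadj
      have hzx : z ≠ dblC Q := by
        intro h; rw [h] at hzadj; exact adj2_irrefl _ hzadj
      obtain ⟨q, hq, hq2⟩ := Finset.mem_image.mp h1
      have hq1 : q.1 < 2 := (hbd q hq).1
      have hqmem : (q.1, c.2) ∈ Q := by
        have : (q.1, q.2) = q := rfl
        rw [← hq2, this]; exact hq
      have hlz : (q.1, z) ∈ Q := by
        rw [hz]; exact layer_nbr hb hk hQ hqmem h2
      have hsplit : q.1 = 0 ∨ q.1 = 1 := by omega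
      rcases hsplit with h | h
      · have hnot : ¬ ((1 : ℕ), z) ∈ Q := by
          intro hmem1
          apply hzx
          apply only_dbl hb hk hQ (u := ((0:ℕ), z)) (v := ((1:ℕ), z)) _ hmem1 rfl (by simp)
          rw [← h]; exact hlz
        rw [h3, show (decide (((1 : ℕ), z) ∈ Q)) = false from decide_eq_false hnot]
        simp only [cond_false]
        rw [← h]; exact hqmem
      · have hyes : ((1 : ℕ), z) ∈ Q := by rw [← h]; exact hlz
        rw [h3, show (decide (((1 : ℕ), z) ∈ Q)) = true from decide_eq_true hyes]
        simp only [cond_true]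
        rw [← h]; exact hqmem

lemma liftQ_congr {P : Finset (ℕ × ℕ)} {x : ℕ × ℕ} {g1 g2 : ℕ × ℕ → Bool}
    (h : ∀ y ∈ P.erase x, g1 (nbrF P x y) = g2 (nbrF P x y)) :
    liftQ P x g1 = liftQ P x g2 := by
  unfold liftQ
  congr 1
  apply Finset.image_congr
  intro y hy
  dsimp only
  rw [h y (Finset.mem_coe.mp hy)]

lemma minpoly3_box {b k : ℕ} {Q : Finset (ℕ × ℕ × ℕ)} (hQ : MinPoly3D 2 b k Q) :
    Q ⊆ Finset.range 2 ×ˢ (Finset.range b ×ˢ Finset.range k) := by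
  intro c hc
  obtain ⟨h1, h2, h3⟩ := hQ.2.2.1.1 c hc
  rw [Finset.mem_product, Finset.mem_product]
  exact ⟨Finset.mem_range.mpr h1, Finset.mem_range.mpr h2, Finset.mem_range.mpr h3⟩

lemma fiber_card {b k : ℕ} (hb : 1 ≤ b) (hk : 1 ≤ k) {P : Finset (ℕ × ℕ)} {x : ℕ × ℕ}
    (hP : MinPoly2D b k P) (hx : x ∈ P) :
    (((Finset.range 2 ×ˢ (Finset.range b ×ˢ Finset.range k)).powerset.filter
        (fun Q => MinPoly3D 2 b k Q)).filter
      (fun Q => proj Q = P ∧ dblC Q = x)).card = 2 ^ deg2 P x := by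
  classical
  set N := P.filter (fun y => Adj2 x y) with hN
  have hnbrN : ∀ y ∈ P.erase x, nbrF P x y ∈ N := by
    intro y hy
    rw [Finset.mem_erase] at hy
    obtain ⟨hzP, hzadj, -⟩ := nbrF_spec hP.2.1 hx hy.2 hy.1
    rw [hN, Finset.mem_filter]
    exact ⟨hzP, hzadj⟩
  have hcard2 : (Finset.univ : Finset ({z // z ∈ N} → Bool)).card = 2 ^ deg2 P x := by
    rw [Finset.card_univ, Fintype.card_fun, Fintype.card_bool, Fintype.card_coe]
    rfl
  rw [← hcard2]
  refine Finset.card_bij'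
    (fun Q _ => (fun z : {z // z ∈ N} => decide (((1 : ℕ), z.1) ∈ Q)))
    (fun f _ => liftQ P x (fun z => if h : z ∈ N then f ⟨z, h⟩ else false))
    (fun Q hQ => Finset.mem_univ _) ?_ ?_ ?_
  · -- j maps into the fiber
    intro f _
    set gf : ℕ × ℕ → Bool := fun z => if h : z ∈ N then f ⟨z, h⟩ else false with hgf
    have hlift := liftQ_minpoly hb hk hP hx gf
    rw [Finset.mem_filter, Finset.mem_filter, Finset.mem_powerset]
    refine ⟨⟨minpoly3_box hlift, hlift⟩, liftQ_proj hx, ?_⟩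
    exact dblC_eq hb hk hlift ⟨liftQ_mem_x (by omega), liftQ_mem_x (by omega)⟩
  · -- left inverse : j (i Q) = Q
    intro Q hQmem
    rw [Finset.mem_filter, Finset.mem_filter, Finset.mem_powerset] at hQmem
    obtain ⟨⟨-, hQ⟩, hproj, hdbl⟩ := hQmem
    have hQlift := fiber_eq_lift hb hk hQ
    rw [hproj, hdbl] at hQlift
    dsimp only
    conv_rhs => rw [hQlift]
    apply liftQ_congr
    intro y hy
    rw [dif_pos (hnbrN y hy)]
  · -- right inverse : i (j f) = f
    intro f _
    funext z
    set gf : ℕ × ℕ → Bool := fun z => if h : z ∈ N then f ⟨z, h⟩ else false with hgf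
    have hz1N : z.1 ∈ N := z.2
    have hz1P : z.1 ∈ P := (Finset.mem_filter.mp hz1N).1
    have hz1adj : Adj2 x z.1 := (Finset.mem_filter.mp hz1N).2
    have hz1x : z.1 ≠ x := by
      intro h; rw [h] at hz1adj; exact adj2_irrefl _ hz1adj
    have hnself : nbrF P x z.1 = z.1 :=
      nbrF_eq hb hk hP hx hz1P hz1adj ReflTransGen.refl
    have hgfz : gf z.1 = f z := by
      rw [hgf]
      simp only
      rw [dif_pos hz1N]
    have hmem_iff : (((1 : ℕ), z.1) ∈ liftQ P x gf) ↔ f z = true := by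
      rw [mem_liftQ]
      constructor
      · rintro ((h | h) | ⟨-, -, h3⟩)
        · exact absurd (congrArg Prod.fst h) (by simp)
        · exact absurd (congrArg Prod.snd h) hz1x
        · simp only at h3
          rw [hnself, hgfz] at h3
          have := congrArg Prod.fst h3
          simp only at this
          cases hfz : f z
          · rw [hfz] at this; simp at this
          · rfl
      · intro hfz
        right
        refine ⟨hz1P, hz1x, ?_⟩
        simp only
        rw [hnself, hgfz, hfz]
        rfl
    cases hfz : f z
    · apply decide_eq_false
      rw [hmem_iff, hfz]
      simp
    · apply decide_eq_true
      rw [hmem_iff, hfz]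

/-- The number of minimal 3D polyominoes inscribed in a `2 × b × k` prism equals
`Σ_P Σ_{x ∈ P} 2^{deg x}`, summed over the minimal 2D polyominoes `P` inscribed
in a `b × k` rectangle. -/
theorem prism2_count (b k : ℕ) (hb : 1 ≤ b) (hk : 1 ≤ k) :
    {Q : Finset (ℕ × ℕ × ℕ) | MinPoly3D 2 b k Q}.ncard =
      ∑ P ∈ ((Finset.range b ×ˢ Finset.range k).powerset.filter
          fun P => MinPoly2D b k P),
        ∑ x ∈ P, 2 ^ deg2 P x := by
  classical
  set S := (Finset.range b ×ˢ Finset.range k).powerset.filter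
    (fun P => MinPoly2D b k P) with hS
  set T := (Finset.range 2 ×ˢ (Finset.range b ×ˢ Finset.range k)).powerset.filter
    (fun Q => MinPoly3D 2 b k Q) with hT
  have hset : {Q : Finset (ℕ × ℕ × ℕ) | MinPoly3D 2 b k Q} = ↑T := by
    ext Q
    rw [Set.mem_setOf_eq, hT, Finset.mem_coe, Finset.mem_filter, Finset.mem_powerset]
    exact ⟨fun h => ⟨minpoly3_box h, h⟩, fun h => h.2⟩
  rw [hset, Set.ncard_coe_finset]
  have hmem : ∀ Q ∈ T, (⟨proj Q, dblC Q⟩ : Σ _ : Finset (ℕ × ℕ), ℕ × ℕ)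
      ∈ S.sigma (fun P => P) := by
    intro Q hQmem
    rw [hT, Finset.mem_filter, Finset.mem_powerset] at hQmem
    obtain ⟨-, hQ⟩ := hQmem
    rw [Finset.mem_sigma]
    constructor
    · rw [hS, Finset.mem_filter, Finset.mem_powerset]
      refine ⟨?_, proj_minpoly hb hk hQ⟩
      intro c hc
      obtain ⟨h1, h2⟩ := (proj_minpoly hb hk hQ).2.2.1.1 c hc
      rw [Finset.mem_product]
      exact ⟨Finset.mem_range.mpr h1, Finset.mem_range.mpr h2⟩
    · exact Finset.mem_image_of_mem _ (dblC_spec hb hk hQ).1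
  rw [Finset.card_eq_sum_card_fiberwise hmem, Finset.sum_sigma]
  apply Finset.sum_congr rfl
  intro P hPmem
  apply Finset.sum_congr rfl
  intro x hx
  have hPmin : MinPoly2D b k P := by
    rw [hS, Finset.mem_filter] at hPmem
    exact hPmem.2
  have hpred : Finset.filter (fun Q => (⟨proj Q, dblC Q⟩ : Σ _ : Finset (ℕ × ℕ), ℕ × ℕ)
      = ⟨P, x⟩) T = Finset.filter (fun Q => proj Q = P ∧ dblC Q = x) T := by
    apply Finset.filter_congr
    intro Q _
    rw [Sigma.mk.inj_iff]
    constructor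
    · rintro ⟨h1, h2⟩
      exact ⟨h1, eq_of_heq h2⟩
    · rintro ⟨h1, h2⟩
      exact ⟨h1, heq_of_eq h2⟩
  rw [hpred]
  exact fiber_card hb hk hPmin hx
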